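/- arXiv:1601.01019 — 2 statements merged into one kernel-verified Lean document; each statement's English description precedes it below -/
import Mathlib

section
/- Let f : ℝⁿ → ℝⁿ be locally Lipschitz, T > 0, and X_T ⊆ ℝⁿ. Suppose v ∈ C¹([0,T] × ℝⁿ), w : ℝⁿ → ℝ continuous, and q ∈ ℝ satisfy: (i) v(T, x) + q ≥ 0 for all x ∈ X_T; (ii) ∂v/∂t + ⟨∇ₓ v, f⟩ ≤ 0 on [0,T] × ℝⁿ; (iii) w(x) - v(0, x) - q ≥ 1 for all x ∈ ℝⁿ. Then every initial condition x₀ whose trajectory satisfies x(T) ∈ X_T obeys w(x₀) ≥ 1; that is, the 1-superlevel set of w contains the backward reachable set of X_T. -/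
/-- dual feasibility implies the 1-superlevel set of w contains the
backward reachable set of X_T (single mode, no uncertainty). -/
theorem stmt_5 {n : ℕ}
    (f : EuclideanSpace ℝ (Fin n) → EuclideanSpace ℝ (Fin n)) (hf : LocallyLipschitz f)
    (T : ℝ) (hT : 0 < T) (XT : Set (EuclideanSpace ℝ (Fin n)))
    (v : ℝ × EuclideanSpace ℝ (Fin n) → ℝ) (hv : ContDiff ℝ 1 v)
    (w : EuclideanSpace ℝ (Fin n) → ℝ) (hw : Continuous w) (q : ℝ)
    (hi : ∀ y ∈ XT, v (T, y) + q ≥ 0)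
    (hii : ∀ t ∈ Set.Icc (0 : ℝ) T, ∀ y, fderiv ℝ v (t, y) (1, f y) ≤ 0)
    (hiii : ∀ y, w y - v (0, y) - q ≥ 1)
    (x : ℝ → EuclideanSpace ℝ (Fin n))
    (hx : ∀ t, HasDerivAt x (f (x t)) t)
    (hxT : x T ∈ XT) :
    w (x 0) ≥ 1 := by
  set g : ℝ → ℝ := fun t => v (t, x t) with hg
  have hgd : ∀ t : ℝ, HasDerivAt g (fderiv ℝ v (t, x t) (1, f (x t))) t := by
    intro t
    have hcurve : HasDerivAt (fun s : ℝ => ((s, x s) : ℝ × EuclideanSpace ℝ (Fin n)))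
        (1, f (x t)) t := (hasDerivAt_id t).prodMk (hx t)
    have hvd : HasFDerivAt v (fderiv ℝ v (t, x t)) (t, x t) :=
      (hv.differentiable one_ne_zero (t, x t)).hasFDerivAt
    exact hvd.comp_hasDerivAt t hcurve
  have hanti : AntitoneOn g (Set.Icc 0 T) := by
    apply antitoneOn_of_deriv_nonpos (convex_Icc 0 T)
    · exact (continuous_iff_continuousAt.2 fun t => (hgd t).continuousAt).continuousOn
    · intro t ht
      exact ((hgd t).differentiableAt).differentiableWithinAt
    · intro t ht
      rw [(hgd t).deriv]
      exact hii t (Set.mem_Icc_of_Ioo (by rwa [interior_Icc] at ht)) (x t)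
  have h1 : g T ≤ g 0 := hanti (Set.left_mem_Icc.2 hT.le) (Set.right_mem_Icc.2 hT.le) hT.le
  have h2 := hi (x T) hxT
  have h3 := hiii (x 0)
  simp only [hg] at h1
  linarith
end

section
/- Let f : ℝⁿ × Θ → ℝⁿ where Θ is a compact set, μ_θ a Borel probability measure on Θ, T > 0, X_T ⊆ ℝⁿ. Suppose v ∈ C¹([0,T] × ℝⁿ × Θ), w continuous, q ∈ ℝ satisfy: (i) v(T, x, θ) + q ≥ 0 for all x ∈ X_T, θ ∈ Θ; (ii) ∂v/∂t + ⟨∇ₓ v, f(x,θ)⟩ ≤ 0 on [0,T] × ℝⁿ × Θ; (iii) w(x) - ∫_Θ v(0, x, θ) dμ_θ(θ) - q ≥ 1 for all x. Then any x₀ such that, for every θ in the support of μ_θ, the solution of ẋ = f(x, θ) from x₀ reaches X_T at time T, satisfies w(x₀) ≥ 1. -/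
open MeasureTheory

/-- The support of a measure: points all of whose neighborhoods have positive measure. -/
def measureSupport {α : Type*} [TopologicalSpace α] [MeasurableSpace α]
    (μ : Measure α) : Set α :=
  {x | ∀ U ∈ nhds x, μ U ≠ 0}

/-- single-mode dual outer approximation with a constant uncertain
parameter θ drawn from a probability measure μθ on a compact set Θ: dual feasibility
implies that every initial condition reaching X_T at time T for all θ in the support
of μθ satisfies w(x₀) ≥ 1. -/
theorem stmt_6 {n : ℕ} {Θ : Type*}
    [MetricSpace Θ] [CompactSpace Θ] [MeasurableSpace Θ] [BorelSpace Θ]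
    (f : EuclideanSpace ℝ (Fin n) → Θ → EuclideanSpace ℝ (Fin n))
    (μθ : Measure Θ) [IsProbabilityMeasure μθ]
    (T : ℝ) (hT : 0 < T) (XT : Set (EuclideanSpace ℝ (Fin n)))
    (v : ℝ → EuclideanSpace ℝ (Fin n) → Θ → ℝ)
    (hvC : Continuous fun p : (ℝ × EuclideanSpace ℝ (Fin n)) × Θ => v p.1.1 p.1.2 p.2)
    (hv : ∀ θ, ContDiff ℝ 1 fun p : ℝ × EuclideanSpace ℝ (Fin n) => v p.1 p.2 θ)
    (w : EuclideanSpace ℝ (Fin n) → ℝ) (hw : Continuous w) (q : ℝ)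
    (hi : ∀ y ∈ XT, ∀ θ, v T y θ + q ≥ 0)
    (hii : ∀ t ∈ Set.Icc (0 : ℝ) T, ∀ y θ,
      fderiv ℝ (fun p : ℝ × EuclideanSpace ℝ (Fin n) => v p.1 p.2 θ) (t, y) (1, f y θ) ≤ 0)
    (hiii : ∀ y, w y - (∫ θ, v 0 y θ ∂μθ) - q ≥ 1)
    (x₀ : EuclideanSpace ℝ (Fin n))
    (hreach : ∀ θ ∈ measureSupport μθ, ∃ x : ℝ → EuclideanSpace ℝ (Fin n),
      x 0 = x₀ ∧ (∀ t, HasDerivAt x (f (x t) θ) t) ∧ x T ∈ XT) :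
    w x₀ ≥ 1 := by
  -- Step 1: pointwise bound on the support
  have key : ∀ θ ∈ measureSupport μθ, -q ≤ v 0 x₀ θ := by
    intro θ hθ
    obtain ⟨x, hx0, hx', hxT⟩ := hreach θ hθ
    set g : ℝ → ℝ := fun t => v t (x t) θ with hg_def
    have hg : ∀ t, HasDerivAt g
        (fderiv ℝ (fun p : ℝ × EuclideanSpace ℝ (Fin n) => v p.1 p.2 θ) (t, x t)
          (1, f (x t) θ)) t := by
      intro t
      have h1 : HasFDerivAt (fun p : ℝ × EuclideanSpace ℝ (Fin n) => v p.1 p.2 θ)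
          (fderiv ℝ (fun p : ℝ × EuclideanSpace ℝ (Fin n) => v p.1 p.2 θ) (t, x t)) (t, x t) :=
        ((hv θ).differentiable one_ne_zero (t, x t)).hasFDerivAt
      have h2 : HasDerivAt (fun t : ℝ => (t, x t)) ((1 : ℝ), f (x t) θ) t :=
        (hasDerivAt_id t).prodMk (hx' t)
      exact h1.comp_hasDerivAt t h2
    have hanti : AntitoneOn g (Set.Icc 0 T) := by
      apply antitoneOn_of_deriv_nonpos (convex_Icc 0 T)
      · exact fun t _ => ((hg t).continuousAt).continuousWithinAt
      · intro t ht
        exact ((hg t).differentiableAt).differentiableWithinAt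
      · intro t ht
        rw [(hg t).deriv]
        rw [interior_Icc] at ht
        exact hii t (Set.mem_Icc_of_Ioo ht) (x t) θ
    have h0T : g T ≤ g 0 :=
      hanti (Set.left_mem_Icc.2 hT.le) (Set.right_mem_Icc.2 hT.le) hT.le
    have hgT : -q ≤ g T := by
      have := hi (x T) hxT θ; simp only [hg_def]; linarith
    simpa [hg_def, hx0] using hgT.trans h0T
  -- Step 2: the complement of the support is null
  have hnull : μθ (measureSupport μθ)ᶜ = 0 := by
    apply measure_null_of_locally_null
    intro θ hθ
    simp only [measureSupport, Set.mem_compl_iff, Set.mem_setOf_eq, not_forall] at hθ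
    obtain ⟨U, hU, hU0⟩ := hθ
    push_neg at hU0
    exact ⟨U, nhdsWithin_le_nhds hU, hU0⟩
  have hae : ∀ᵐ θ ∂μθ, -q ≤ v 0 x₀ θ := by
    filter_upwards [measure_eq_zero_iff_ae_notMem.mp hnull] with θ hθ
    exact key θ (by simpa using hθ)
  -- Step 3: integrate
  have hcont : Continuous fun θ => v 0 x₀ θ := by
    have : (fun θ => v 0 x₀ θ) =
        (fun p : (ℝ × EuclideanSpace ℝ (Fin n)) × Θ => v p.1.1 p.1.2 p.2) ∘
          fun θ => (((0 : ℝ), x₀), θ) := rfl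
    rw [this]
    exact hvC.comp (continuous_const.prodMk continuous_id)
  have hint : Integrable (fun θ => v 0 x₀ θ) μθ :=
    hcont.integrable_of_hasCompactSupport (isClosed_tsupport _).isCompact
  have hle : -q ≤ ∫ θ, v 0 x₀ θ ∂μθ := by
    have := integral_mono_ae (integrable_const (-q)) hint hae
    simpa using this
  have := hiii x₀
  linarith
end
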